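/- arXiv:2112.11041 — 5 statements merged into one kernel-verified Lean document; each statement's English description precedes it below -/
import Mathlib

section
/- If the column spaces of matrices A and B are orthogonal (i.e., every column of A is orthogonal to every column of B, equivalently AᵀB = 0), then the nuclear norm of the concatenation equals the sum of nuclear norms: ‖[A, B]‖_* = ‖A‖_* + ‖B‖_*. -/
open Matrix

noncomputable def singularValues {d : ℕ} {n : Type*} [Fintype n]
    (M : Matrix (Fin d) n ℝ) : Fin d → ℝ :=
  fun i => Real.sqrt ((Matrix.isHermitian_mul_conjTranspose_self M).eigenvalues i)

noncomputable def nuclearNorm {d : ℕ} {n : Type*} [Fintype n]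
    (M : Matrix (Fin d) n ℝ) : ℝ :=
  ∑ i, singularValues M i

noncomputable def matrixSpectralNorm {d : ℕ} {n : Type*} [Fintype n]
    (M : Matrix (Fin d) n ℝ) : ℝ :=
  ⨆ i, singularValues M i

section SqrtCompat
open scoped MatrixOrder

noncomputable def Matrix.PosSemidef.sqrt {d : ℕ} {P : Matrix (Fin d) (Fin d) ℝ}
    (_hP : P.PosSemidef) : Matrix (Fin d) (Fin d) ℝ :=
  CFC.sqrt P

lemma Matrix.PosSemidef.posSemidef_sqrt {d : ℕ} {P : Matrix (Fin d) (Fin d) ℝ}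
    (hP : P.PosSemidef) : hP.sqrt.PosSemidef :=
  Matrix.nonneg_iff_posSemidef.mp (CFC.sqrt_nonneg P)

lemma Matrix.PosSemidef.sqrt_mul_self {d : ℕ} {P : Matrix (Fin d) (Fin d) ℝ}
    (hP : P.PosSemidef) : hP.sqrt * hP.sqrt = P :=
  CFC.sqrt_mul_sqrt_self P hP.nonneg

lemma Matrix.PosSemidef.sq_sqrt {d : ℕ} {P : Matrix (Fin d) (Fin d) ℝ}
    (hP : P.PosSemidef) : hP.sqrt ^ 2 = P := by
  rw [pow_two]; exact hP.sqrt_mul_self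

lemma Matrix.PosSemidef.eq_sqrt_of_sq_eq {d : ℕ} {A : Matrix (Fin d) (Fin d) ℝ}
    (hA : A.PosSemidef) {B : Matrix (Fin d) (Fin d) ℝ} (hB : B.PosSemidef) (hAB : A ^ 2 = B) :
    A = hB.sqrt :=
  (CFC.sqrt_unique (by rw [← pow_two]; exact hAB) hA.nonneg).symm

lemma trace_sqrt_eq {d : ℕ} {P : Matrix (Fin d) (Fin d) ℝ} (hP : P.PosSemidef) :
    hP.sqrt.trace = ∑ i, Real.sqrt (hP.1.eigenvalues i) := by
  rw [Matrix.PosSemidef.sqrt, CFC.sqrt_eq_cfc, cfc_nnreal_eq_real _ P, hP.1.cfc_eq,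
    Matrix.IsHermitian.cfc, Unitary.conjStarAlgAut_apply, Matrix.trace_mul_cycle,
    (Matrix.mem_unitaryGroup_iff').mp hP.1.eigenvectorUnitary.2, Matrix.one_mul,
    Matrix.trace_diagonal]
  refine Finset.sum_congr rfl fun i _ => ?_
  simp [hP.eigenvalues_nonneg i]

end SqrtCompat

lemma nuclearNorm_eq_trace_sqrt {d : ℕ} {n : Type*} [Fintype n] (M : Matrix (Fin d) n ℝ) :
    nuclearNorm M = (Matrix.posSemidef_self_mul_conjTranspose M).sqrt.trace := by
  rw [trace_sqrt_eq]; rfl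

lemma sqrt_add_of_mul_eq_zero {d : ℕ} {P Q : Matrix (Fin d) (Fin d) ℝ}
    (hP : P.PosSemidef) (hQ : Q.PosSemidef) (hPQ : P * Q = 0) :
    (hP.add hQ).sqrt = hP.sqrt + hQ.sqrt := by
  have hPQ' : P * hQ.sqrt = 0 := by
    rw [← Matrix.self_mul_conjTranspose_eq_zero (A := P * hQ.sqrt)]
    rw [Matrix.conjTranspose_mul, hQ.posSemidef_sqrt.1, hP.1]
    calc P * hQ.sqrt * (hQ.sqrt * P) = P * (hQ.sqrt * hQ.sqrt) * P := by
            simp only [Matrix.mul_assoc]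
      _ = 0 := by rw [hQ.sqrt_mul_self, hPQ, Matrix.zero_mul]
  have key : hP.sqrt * hQ.sqrt = 0 := by
    rw [← Matrix.conjTranspose_mul_self_eq_zero (A := hP.sqrt * hQ.sqrt)]
    rw [Matrix.conjTranspose_mul, hP.posSemidef_sqrt.1, hQ.posSemidef_sqrt.1]
    calc hQ.sqrt * hP.sqrt * (hP.sqrt * hQ.sqrt)
        = hQ.sqrt * ((hP.sqrt * hP.sqrt) * hQ.sqrt) := by simp only [Matrix.mul_assoc]
      _ = 0 := by rw [hP.sqrt_mul_self, hPQ', Matrix.mul_zero]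
  have key' : hQ.sqrt * hP.sqrt = 0 := by
    have := congrArg Matrix.conjTranspose key
    rwa [Matrix.conjTranspose_mul, hP.posSemidef_sqrt.1, hQ.posSemidef_sqrt.1,
      Matrix.conjTranspose_zero] at this
  symm
  apply Matrix.PosSemidef.eq_sqrt_of_sq_eq (hP.posSemidef_sqrt.add hQ.posSemidef_sqrt)
  rw [pow_two, Matrix.add_mul, Matrix.mul_add, Matrix.mul_add, key, key',
    hP.sqrt_mul_self, hQ.sqrt_mul_self]
  simp

theorem nuclearNorm_fromColumns_eq_of_orthogonal {d n m : ℕ}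
    (A : Matrix (Fin d) (Fin n) ℝ) (B : Matrix (Fin d) (Fin m) ℝ)
    (h : Aᵀ * B = 0) :
    nuclearNorm (Matrix.fromCols A B) = nuclearNorm A + nuclearNorm B := by
  have hA := Matrix.posSemidef_self_mul_conjTranspose A
  have hB := Matrix.posSemidef_self_mul_conjTranspose B
  have hM : Matrix.fromCols A B * (Matrix.fromCols A B)ᴴ = A * Aᴴ + B * Bᴴ := by
    rw [Matrix.conjTranspose_fromCols_eq_fromRows_conjTranspose,
      Matrix.fromCols_mul_fromRows]
  have hPQ : (A * Aᴴ) * (B * Bᴴ) = 0 := by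
    have hAB : Aᴴ * B = 0 := by
      rw [Matrix.conjTranspose_eq_transpose_of_trivial]; exact h
    rw [Matrix.mul_assoc, ← Matrix.mul_assoc Aᴴ, hAB, Matrix.zero_mul, Matrix.mul_zero]
  rw [nuclearNorm_eq_trace_sqrt, nuclearNorm_eq_trace_sqrt, nuclearNorm_eq_trace_sqrt]
  have h1 : (Matrix.posSemidef_self_mul_conjTranspose (Matrix.fromCols A B)).sqrt
      = (hA.add hB).sqrt :=
    Matrix.PosSemidef.eq_sqrt_of_sq_eq
      (Matrix.posSemidef_self_mul_conjTranspose (Matrix.fromCols A B)).posSemidef_sqrt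
      (hA.add hB)
      (by rw [Matrix.PosSemidef.sq_sqrt, hM])
  rw [h1, sqrt_add_of_mul_eq_zero hA hB hPQ, Matrix.trace_add]
end

section
/- For matrices A and B with the same number of rows, the Euclidean norm of the vector (‖A‖_*, ‖B‖_*) is at most the nuclear norm of the concatenation: √(‖A‖_*² + ‖B‖_*²) ≤ ‖[A, B]‖_*. -/
open Matrix

noncomputable def spectralNorm' {d : ℕ} {n : Type*} [Fintype n]
    (M : Matrix (Fin d) n ℝ) : ℝ :=
  ⨆ i, singularValues M i

/-- Eigenvalues only depend on the matrix. -/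
lemma eigenvalues_congr' {d : ℕ} {X Y : Matrix (Fin d) (Fin d) ℝ} (h : X = Y)
    (hX : X.IsHermitian) (hY : Y.IsHermitian) : hX.eigenvalues = hY.eigenvalues := by
  subst h; rfl

/-- Diagonal entries of a real PSD matrix are nonnegative. -/
lemma psd_diag_nonneg {d : ℕ} {S : Matrix (Fin d) (Fin d) ℝ} (hS : S.PosSemidef) (i : Fin d) :
    0 ≤ S i i := by
  exact hS.diag_nonneg

/-- Key lemma: the sum of square roots of eigenvalues of a PSD matrix is at most
the sum of square roots of diagonal entries after conjugation by any unitary. -/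
lemma sum_sqrt_eigenvalues_le {d : ℕ} {P : Matrix (Fin d) (Fin d) ℝ} (hP : P.PosSemidef)
    (U : Matrix (Fin d) (Fin d) ℝ) (hU : U ∈ Matrix.unitaryGroup (Fin d) ℝ) :
    ∑ i, Real.sqrt (hP.1.eigenvalues i) ≤ ∑ i, Real.sqrt ((star U * P * U) i i) := by
  classical
  set μ := hP.1.eigenvalues with hμ
  set V : Matrix (Fin d) (Fin d) ℝ := (hP.1.eigenvectorUnitary : Matrix (Fin d) (Fin d) ℝ)
    with hV
  have hVmem : V ∈ Matrix.unitaryGroup (Fin d) ℝ := (hP.1.eigenvectorUnitary).2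
  set W : Matrix (Fin d) (Fin d) ℝ := star U * V with hW
  have hUUs : U * star U = 1 := Matrix.mem_unitaryGroup_iff.mp hU
  have hUsU : star U * U = 1 := Matrix.mem_unitaryGroup_iff'.mp hU
  have hVVs : V * star V = 1 := Matrix.mem_unitaryGroup_iff.mp hVmem
  have hVsV : star V * V = 1 := Matrix.mem_unitaryGroup_iff'.mp hVmem
  have hWWs : W * star W = 1 := by
    rw [hW, StarMul.star_mul, star_star]
    calc star U * V * (star V * U) = star U * (V * star V) * U := by noncomm_ring
      _ = 1 := by rw [hVVs, mul_one, hUsU]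
  have hWsW : star W * W = 1 := by
    rw [hW, StarMul.star_mul, star_star]
    calc star V * U * (star U * V) = star V * (U * star U) * V := by noncomm_ring
      _ = 1 := by rw [hUUs, mul_one, hVsV]
  -- row sums of squares are 1
  have hrow : ∀ i, ∑ j, (W i j) ^ 2 = 1 := by
    intro i
    have := congrFun (congrFun hWWs i) i
    simpa [Matrix.mul_apply, Matrix.one_apply, Matrix.star_apply, pow_two] using this
  -- column sums of squares are 1
  have hcol : ∀ j, ∑ i, (W i j) ^ 2 = 1 := by
    intro j
    have := congrFun (congrFun hWsW j) j
    simpa [Matrix.mul_apply, Matrix.one_apply, Matrix.star_apply, pow_two] using this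
  -- diagonal entries after conjugation
  have hentry : ∀ i, (star U * P * U) i i = ∑ j, (W i j) ^ 2 * μ j := by
    intro i
    have hPdec : P = V * Matrix.diagonal (RCLike.ofReal ∘ μ) * star V := hP.1.spectral_theorem
    have hD : Matrix.diagonal (RCLike.ofReal ∘ μ) = Matrix.diagonal μ := by
      congr 1
    have : star U * P * U = W * Matrix.diagonal μ * star W := by
      rw [hPdec, hD, hW]
      simp only [Matrix.star_mul, star_star]
      noncomm_ring
    rw [this]
    rw [show W * Matrix.diagonal μ * star W = (W * Matrix.diagonal μ) * star W from rfl]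
    rw [Matrix.mul_apply]
    refine Finset.sum_congr rfl fun j _ => ?_
    rw [Matrix.mul_diagonal, Matrix.star_apply, star_trivial]
    ring
  -- μ nonneg
  have hμ0 : ∀ j, 0 ≤ μ j := hP.eigenvalues_nonneg
  -- main estimate
  calc ∑ j, Real.sqrt (μ j) = ∑ j, (∑ i, (W i j) ^ 2) * Real.sqrt (μ j) := by
        refine Finset.sum_congr rfl fun j _ => ?_
        rw [hcol j, one_mul]
    _ = ∑ i, ∑ j, (W i j) ^ 2 * Real.sqrt (μ j) := by
        rw [Finset.sum_comm]
        simp_rw [Finset.sum_mul]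
    _ ≤ ∑ i, Real.sqrt (∑ j, (W i j) ^ 2 * μ j) := by
        refine Finset.sum_le_sum fun i _ => ?_
        refine Real.le_sqrt_of_sq_le ?_
        calc (∑ j, (W i j) ^ 2 * Real.sqrt (μ j)) ^ 2
            = (∑ j, |W i j| * (|W i j| * Real.sqrt (μ j))) ^ 2 := by
              congr 1
              refine Finset.sum_congr rfl fun j _ => ?_
              rw [← mul_assoc, ← sq_abs]
              ring
          _ ≤ (∑ j, |W i j| ^ 2) * ∑ j, (|W i j| * Real.sqrt (μ j)) ^ 2 :=
              Finset.sum_mul_sq_le_sq_mul_sq _ _ _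
          _ = ∑ j, (W i j) ^ 2 * μ j := by
              have h1 : ∑ j, |W i j| ^ 2 = 1 := by
                simp_rw [sq_abs]; exact hrow i
              rw [h1, one_mul]
              refine Finset.sum_congr rfl fun j _ => ?_
              rw [mul_pow, sq_abs, Real.sq_sqrt (hμ0 j)]
    _ = ∑ i, Real.sqrt ((star U * P * U) i i) := by
        refine Finset.sum_congr rfl fun i _ => ?_
        rw [hentry i]

/-- Minkowski-type step in ℝ², via complex numbers. -/
lemma sqrt_sq_add_sq_sum_le {d : ℕ} (p q : Fin d → ℝ) (hp : ∀ i, 0 ≤ p i) (hq : ∀ i, 0 ≤ q i) :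
    Real.sqrt ((∑ i, Real.sqrt (p i)) ^ 2 + (∑ i, Real.sqrt (q i)) ^ 2)
      ≤ ∑ i, Real.sqrt (p i + q i) := by
  classical
  set z : Fin d → ℂ := fun i => ⟨Real.sqrt (p i), Real.sqrt (q i)⟩ with hz
  have habs : ∀ i, ‖z i‖ = Real.sqrt (p i + q i) := by
    intro i
    rw [Complex.norm_def, Complex.normSq_mk]
    congr 1
    rw [Real.mul_self_sqrt (hp i), Real.mul_self_sqrt (hq i)]
  have hre : (∑ i, z i).re = ∑ i, Real.sqrt (p i) := by
    rw [Complex.re_sum]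
  have him : (∑ i, z i).im = ∑ i, Real.sqrt (q i) := by
    rw [Complex.im_sum]
  have h1 : ‖∑ i, z i‖ ≤ ∑ i, ‖z i‖ := by
    simpa using norm_sum_le Finset.univ z
  calc Real.sqrt ((∑ i, Real.sqrt (p i)) ^ 2 + (∑ i, Real.sqrt (q i)) ^ 2)
      = ‖∑ i, z i‖ := by
        rw [Complex.norm_def, Complex.normSq_apply, hre, him]
        ring_nf
    _ ≤ ∑ i, ‖z i‖ := h1
    _ = ∑ i, Real.sqrt (p i + q i) := by
        exact Finset.sum_congr rfl fun i _ => habs i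

theorem sqrt_sq_add_sq_le_nuclearNorm_fromColumns {d n m : ℕ}
    (A : Matrix (Fin d) (Fin n) ℝ) (B : Matrix (Fin d) (Fin m) ℝ) :
    Real.sqrt ((nuclearNorm A) ^ 2 + (nuclearNorm B) ^ 2)
      ≤ nuclearNorm (Matrix.fromCols A B) := by
  classical
  set P := A * Aᴴ with hPdef
  set Q := B * Bᴴ with hQdef
  have hP : P.PosSemidef := Matrix.posSemidef_self_mul_conjTranspose A
  have hQ : Q.PosSemidef := Matrix.posSemidef_self_mul_conjTranspose B
  have hR : (P + Q).PosSemidef := hP.add hQ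
  set M := Matrix.fromCols A B with hMdef
  have hMM : M * Mᴴ = P + Q := by
    rw [hMdef, Matrix.conjTranspose_fromCols_eq_fromRows_conjTranspose,
      Matrix.fromCols_mul_fromRows]
  -- nuclear norm of M in terms of eigenvalues of P + Q
  have hnM : nuclearNorm M = ∑ i, Real.sqrt (hR.1.eigenvalues i) := by
    unfold nuclearNorm singularValues
    refine Finset.sum_congr rfl fun i _ => ?_
    rw [eigenvalues_congr' hMM (Matrix.isHermitian_mul_conjTranspose_self M) hR.1]
  -- eigenvector unitary of P + Q
  set U : Matrix (Fin d) (Fin d) ℝ := (hR.1.eigenvectorUnitary : Matrix (Fin d) (Fin d) ℝ)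
    with hUdef
  have hU : U ∈ Matrix.unitaryGroup (Fin d) ℝ := (hR.1.eigenvectorUnitary).2
  set p : Fin d → ℝ := fun i => (star U * P * U) i i with hpdef
  set q : Fin d → ℝ := fun i => (star U * Q * U) i i with hqdef
  have hp0 : ∀ i, 0 ≤ p i := by
    intro i
    exact psd_diag_nonneg (hP.conjTranspose_mul_mul_same U) i
  have hq0 : ∀ i, 0 ≤ q i := by
    intro i
    exact psd_diag_nonneg (hQ.conjTranspose_mul_mul_same U) i
  -- eigenvalues of P + Q split as p + q
  have hsplit : ∀ i, hR.1.eigenvalues i = p i + q i := by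
    intro i
    have hdiag : star U * (P + Q) * U
        = Matrix.diagonal (RCLike.ofReal ∘ hR.1.eigenvalues) := by
      have := hR.1.conjStarAlgAut_star_eigenvectorUnitary
      rw [Unitary.conjStarAlgAut_star_apply] at this
      convert this using 2
    have hD : Matrix.diagonal (RCLike.ofReal ∘ hR.1.eigenvalues)
        = Matrix.diagonal hR.1.eigenvalues := by congr 1
    have h1 : (star U * (P + Q) * U) i i = hR.1.eigenvalues i := by
      rw [hdiag, hD, Matrix.diagonal_apply_eq]
    have h2 : star U * (P + Q) * U = star U * P * U + star U * Q * U := by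
      rw [Matrix.mul_add, Matrix.add_mul]
    rw [← h1, h2]
    simp [hpdef, hqdef]
  -- bounds on nuclear norms of A and B
  have hnA : nuclearNorm A ≤ ∑ i, Real.sqrt (p i) := by
    have : nuclearNorm A = ∑ i, Real.sqrt (hP.1.eigenvalues i) := rfl
    rw [this]
    exact sum_sqrt_eigenvalues_le hP U hU
  have hnB : nuclearNorm B ≤ ∑ i, Real.sqrt (q i) := by
    have : nuclearNorm B = ∑ i, Real.sqrt (hQ.1.eigenvalues i) := rfl
    rw [this]
    exact sum_sqrt_eigenvalues_le hQ U hU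
  have hnA0 : 0 ≤ nuclearNorm A := Finset.sum_nonneg fun i _ => Real.sqrt_nonneg _
  have hnB0 : 0 ≤ nuclearNorm B := Finset.sum_nonneg fun i _ => Real.sqrt_nonneg _
  calc Real.sqrt ((nuclearNorm A) ^ 2 + (nuclearNorm B) ^ 2)
      ≤ Real.sqrt ((∑ i, Real.sqrt (p i)) ^ 2 + (∑ i, Real.sqrt (q i)) ^ 2) := by
        apply Real.sqrt_le_sqrt
        gcongr
    _ ≤ ∑ i, Real.sqrt (p i + q i) := sqrt_sq_add_sq_sum_le p q hp0 hq0
    _ = nuclearNorm M := by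
        rw [hnM]
        exact Finset.sum_congr rfl fun i _ => by rw [hsplit i]
end

section
/- Suppose A ∈ ℝ^{d×n} and B ∈ ℝ^{d×m} with d ≤ min(n, m), and the spectral norms satisfy ‖A‖_σ ≤ α and ‖B‖_σ ≤ α. Then ‖A‖_* + ‖B‖_* − ‖[A, B]‖_* ≤ (2 − √2)·α·d. -/
open Matrix

namespace ConcatAux

variable {d : ℕ}

lemma posSemidef_smul {c : ℝ} (hc : 0 ≤ c) {M : Matrix (Fin d) (Fin d) ℝ}
    (hM : M.PosSemidef) : (c • M).PosSemidef := by
  refine posSemidef_iff_dotProduct_mulVec.mpr ⟨?_, fun x => ?_⟩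
  · unfold Matrix.IsHermitian
    rw [conjTranspose_smul, hM.1.eq]
    simp
  · rw [smul_mulVec, dotProduct_smul, smul_eq_mul]
    exact mul_nonneg hc (hM.dotProduct_mulVec_nonneg x)

lemma diag_nonneg {M : Matrix (Fin d) (Fin d) ℝ} (hM : M.PosSemidef) (i : Fin d) :
    0 ≤ M i i := by
  exact hM.diag_nonneg

/-- If `X, Y` are PSD and `X² ⪯ Y²`, then `tr X ≤ tr Y`. -/
lemma trace_le_of_sq_le_sq {X Y : Matrix (Fin d) (Fin d) ℝ}
    (hX : X.PosSemidef) (hY : Y.PosSemidef)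
    (h : (Y * Y - X * X).PosSemidef) : X.trace ≤ Y.trace := by
  classical
  set U : Matrix (Fin d) (Fin d) ℝ := (Matrix.IsHermitian.eigenvectorUnitary hY.1 : Matrix (Fin d) (Fin d) ℝ) with hU
  have hU1 : U * star U = 1 :=
    (Matrix.mem_unitaryGroup_iff).mp (Matrix.IsHermitian.eigenvectorUnitary hY.1).2
  have hU2 : star U * U = 1 :=
    (Matrix.mem_unitaryGroup_iff').mp (Matrix.IsHermitian.eigenvectorUnitary hY.1).2
  have hU1' : ∀ Z : Matrix (Fin d) (Fin d) ℝ, U * (star U * Z) = Z := fun Z => by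
    rw [← Matrix.mul_assoc, hU1, Matrix.one_mul]
  set μ : Fin d → ℝ := hY.1.eigenvalues with hμ
  have hdiagY : star U * Y * U = Matrix.diagonal μ := by
    have := Matrix.IsHermitian.conjStarAlgAut_star_eigenvectorUnitary hY.1
    simp only [Unitary.conjStarAlgAut_apply, Unitary.coe_star, star_star] at this
    rwa [RCLike.ofReal_real_eq_id, Function.id_comp] at this
  set X' : Matrix (Fin d) (Fin d) ℝ := star U * X * U with hX'def
  have hX' : X'.PosSemidef := by
    have := hX.conjTranspose_mul_mul_same U
    rwa [← Matrix.star_eq_conjTranspose] at this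
  have htrX : X'.trace = X.trace := by
    rw [hX'def, Matrix.trace_mul_cycle, hU1, Matrix.one_mul]
  have htrY : Y.trace = ∑ i, μ i := by
    have : (star U * Y * U).trace = Y.trace := by
      rw [Matrix.trace_mul_cycle, hU1, Matrix.one_mul]
    rw [← this, hdiagY, Matrix.trace_diagonal]
  have hXsq : X' * X' = star U * (X * X) * U := by
    simp only [hX'def, Matrix.mul_assoc, hU1']
  have hYsq : Matrix.diagonal (fun i => μ i * μ i) = star U * (Y * Y) * U := by
    rw [← Matrix.diagonal_mul_diagonal, ← hdiagY]
    simp only [Matrix.mul_assoc, hU1']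
  have hsub : (Matrix.diagonal (fun i => μ i * μ i) - X' * X').PosSemidef := by
    have := h.conjTranspose_mul_mul_same U
    rw [← Matrix.star_eq_conjTranspose, Matrix.mul_sub, Matrix.sub_mul] at this
    rwa [hXsq, hYsq]
  have hkey : ∀ i, X' i i ≤ μ i := by
    intro i
    have hμi : 0 ≤ μ i := hY.eigenvalues_nonneg i
    have h1 : (X' * X') i i = ∑ j, (X' i j) ^ 2 := by
      rw [Matrix.mul_apply]
      refine Finset.sum_congr rfl fun j _ => ?_
      have : X' j i = X' i j := by
        have := congrFun (congrFun hX'.1 i) j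
        simpa [Matrix.conjTranspose_apply] using this
      rw [this, sq]
    have h2 : (X' i i) ^ 2 ≤ (X' * X') i i := by
      rw [h1]
      exact Finset.single_le_sum (f := fun j => (X' i j) ^ 2)
        (fun j _ => sq_nonneg _) (Finset.mem_univ i)
    have h3 : (X' * X') i i ≤ μ i * μ i := by
      have := diag_nonneg hsub i
      simp only [Matrix.sub_apply, Matrix.diagonal_apply_eq] at this
      linarith
    nlinarith [sq_nonneg (X' i i + μ i), sq_nonneg (X' i i - μ i)]
  calc X.trace = X'.trace := htrX.symm
    _ = ∑ i, X' i i := rfl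
    _ ≤ ∑ i, μ i := Finset.sum_le_sum fun i _ => hkey i
    _ = Y.trace := htrY.symm

open scoped MatrixOrder in
lemma trace_sqrt {X : Matrix (Fin d) (Fin d) ℝ} (hX : X.PosSemidef) :
    (CFC.sqrt X).trace = ∑ i, Real.sqrt (hX.1.eigenvalues i) := by
  classical
  rw [CFC.sqrt_eq_cfc, cfc_nnreal_eq_real _ X, hX.1.cfc_eq, Matrix.IsHermitian.cfc, Unitary.conjStarAlgAut_apply]
  rw [Matrix.trace_mul_cycle,
    (Matrix.mem_unitaryGroup_iff').mp (Matrix.IsHermitian.eigenvectorUnitary hX.1).2,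
    Matrix.one_mul, Matrix.trace_diagonal]
  simp [RCLike.ofReal_real_eq_id, max_eq_left (hX.eigenvalues_nonneg _)]

lemma eigenvalues_congr {X Y : Matrix (Fin d) (Fin d) ℝ} (hX : X.IsHermitian)
    (hY : Y.IsHermitian) (h : X = Y) (i : Fin d) :
    hX.eigenvalues i = hY.eigenvalues i := by
  subst h; rfl

end ConcatAux

set_option maxHeartbeats 2000000 in
open scoped MatrixOrder in
open ConcatAux in
theorem nuclearNorm_sum_sub_concat_le {d n m : ℕ} (α : ℝ) (hα : 0 < α)
    (hdn : d ≤ n) (hdm : d ≤ m)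
    (A : Matrix (Fin d) (Fin n) ℝ) (B : Matrix (Fin d) (Fin m) ℝ)
    (hA : spectralNorm' A ≤ α) (hB : spectralNorm' B ≤ α) :
    nuclearNorm A + nuclearNorm B - nuclearNorm (Matrix.fromCols A B)
      ≤ (2 - Real.sqrt 2) * α * d := by
  classical
  set P : Matrix (Fin d) (Fin d) ℝ := A * Aᴴ with hPdef
  set Q : Matrix (Fin d) (Fin d) ℝ := B * Bᴴ with hQdef
  have hP : P.PosSemidef := Matrix.posSemidef_self_mul_conjTranspose A
  have hQ : Q.PosSemidef := Matrix.posSemidef_self_mul_conjTranspose B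
  have hPQ : (P + Q).PosSemidef := hP.add hQ
  set S := CFC.sqrt P with hSdef
  set T := CFC.sqrt Q with hTdef
  set M := CFC.sqrt (P + Q) with hMdef
  have hS : S.PosSemidef := (CFC.sqrt_nonneg P).posSemidef
  have hT : T.PosSemidef := (CFC.sqrt_nonneg Q).posSemidef
  have hM : M.PosSemidef := (CFC.sqrt_nonneg (P + Q)).posSemidef
  have hS2 : S * S = P := CFC.sqrt_mul_sqrt_self P hP.nonneg
  have hT2 : T * T = Q := CFC.sqrt_mul_sqrt_self Q hQ.nonneg
  have hM2 : M * M = P + Q := CFC.sqrt_mul_sqrt_self (P + Q) hPQ.nonneg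
  have hs2 : Real.sqrt 2 * Real.sqrt 2 = 2 := Real.mul_self_sqrt (by norm_num)
  -- key inequality : tr S + tr T ≤ √2 tr M
  have key : S.trace + T.trace ≤ Real.sqrt 2 * M.trace := by
    have hYpsd : (Real.sqrt 2 • M).PosSemidef := posSemidef_smul (Real.sqrt_nonneg 2) hM
    have hXpsd : (S + T).PosSemidef := hS.add hT
    have hdiff : ((Real.sqrt 2 • M) * (Real.sqrt 2 • M) - (S + T) * (S + T)).PosSemidef := by
      have heq : (Real.sqrt 2 • M) * (Real.sqrt 2 • M) - (S + T) * (S + T)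
          = (S - T)ᴴ * (S - T) := by
        have hst : (S - T)ᴴ = S - T := by
          rw [Matrix.conjTranspose_sub, hS.1.eq, hT.1.eq]
        rw [hst, Matrix.smul_mul, Matrix.mul_smul, smul_smul, hs2, hM2,
          Matrix.add_mul, Matrix.mul_add, Matrix.mul_add, Matrix.sub_mul,
          Matrix.mul_sub, Matrix.mul_sub, hS2, hT2, two_smul]
        abel
      rw [heq]
      exact Matrix.posSemidef_conjTranspose_mul_self (S - T)
    have := trace_le_of_sq_le_sq hXpsd hYpsd hdiff
    rwa [Matrix.trace_add, Matrix.trace_smul, smul_eq_mul] at this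
  -- nuclear norms as traces
  have hNA : nuclearNorm A = S.trace := by
    rw [hSdef, trace_sqrt hP]; rfl
  have hNB : nuclearNorm B = T.trace := by
    rw [hTdef, trace_sqrt hQ]; rfl
  have hNC : nuclearNorm (Matrix.fromCols A B) = M.trace := by
    have hC : (Matrix.fromCols A B) * (Matrix.fromCols A B)ᴴ = P + Q := by
      rw [Matrix.conjTranspose_fromCols_eq_fromRows_conjTranspose,
        Matrix.fromCols_mul_fromRows]
    rw [hMdef, trace_sqrt hPQ]
    unfold nuclearNorm singularValues
    exact Finset.sum_congr rfl fun i _ => by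
      rw [eigenvalues_congr (Matrix.isHermitian_mul_conjTranspose_self _) hPQ.1 hC i]
  -- singular value bounds
  have hsv_nonneg : ∀ {k : ℕ} (C : Matrix (Fin d) (Fin k) ℝ) (i : Fin d),
      0 ≤ singularValues C i := fun C i => Real.sqrt_nonneg _
  have hboundA : nuclearNorm A ≤ α * d := by
    have hle : ∀ i, singularValues A i ≤ α := fun i =>
      le_trans (le_ciSup (Set.Finite.bddAbove (Set.finite_range _)) i) hA
    calc nuclearNorm A ≤ ∑ _i : Fin d, α := Finset.sum_le_sum fun i _ => hle i
      _ = α * d := by simp [mul_comm]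
  have hboundB : nuclearNorm B ≤ α * d := by
    have hle : ∀ i, singularValues B i ≤ α := fun i =>
      le_trans (le_ciSup (Set.Finite.bddAbove (Set.finite_range _)) i) hB
    calc nuclearNorm B ≤ ∑ _i : Fin d, α := Finset.sum_le_sum fun i _ => hle i
      _ = α * d := by simp [mul_comm]
  have hNAnn : 0 ≤ nuclearNorm A := Finset.sum_nonneg fun i _ => hsv_nonneg A i
  have hNBnn : 0 ≤ nuclearNorm B := Finset.sum_nonneg fun i _ => hsv_nonneg B i
  -- finish
  rw [hNA] at hboundA hNAnn
  rw [hNB] at hboundB hNBnn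
  rw [hNA, hNB, hNC]
  have hkey : S.trace + T.trace ≤ Real.sqrt 2 * M.trace := key
  have hs1 : 1 ≤ Real.sqrt 2 := by
    nlinarith [Real.sqrt_nonneg 2]
  nlinarith [mul_nonneg (sub_nonneg.2 hs1) (sub_nonneg.2 hboundA),
    mul_nonneg (sub_nonneg.2 hs1) (sub_nonneg.2 hboundB),
    mul_nonneg (sub_nonneg.2 hs1) hNAnn,
    mul_nonneg (sub_nonneg.2 hs1) hNBnn,
    Real.sqrt_nonneg 2]
end

section
/- If A ∈ ℝ^{d×n} and B ∈ ℝ^{d×m} have the same column space, with singular value decompositions A = U Σ V₁ᵀ and B = U Λ V₂ᵀ sharing the same left singular vectors U (σᵢ, λᵢ the singular values), then the nuclear norm of the concatenation is ‖[A, B]‖_* = Σᵢ √(σᵢ² + λᵢ²). -/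
open Matrix Polynomial

lemma charpoly_diagonal_aux {d : ℕ} (f : Fin d → ℝ) :
    (Matrix.diagonal f).charpoly = ∏ i, (X - C (f i)) := by
  rw [Matrix.charpoly, Matrix.charmatrix, RingHom.mapMatrix_apply]
  rw [show (Matrix.diagonal f).map C = Matrix.diagonal (fun i => C (f i)) from
    Matrix.diagonal_map (by simp)]
  rw [Matrix.scalar_apply]
  rw [show ((Matrix.diagonal fun _ => (X : Polynomial ℝ)) - Matrix.diagonal fun i => C (f i))
      = Matrix.diagonal (fun i => X - C (f i)) from by
        ext i j; by_cases h : i = j <;> simp [Matrix.diagonal_apply, h]]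
  rw [Matrix.det_diagonal]


lemma charpoly_conj_orth {d : ℕ} (U : Matrix (Fin d) (Fin d) ℝ) (hU : Uᵀ * U = 1)
    (D : Matrix (Fin d) (Fin d) ℝ) :
    (U * D * Uᵀ).charpoly = D.charpoly := by
  have hU' : U * Uᵀ = 1 := mul_eq_one_comm.mp hU
  rw [Matrix.charpoly, Matrix.charpoly, Matrix.charmatrix, Matrix.charmatrix,
    RingHom.mapMatrix_apply, RingHom.mapMatrix_apply]
  have hmap : (U * D * Uᵀ).map C = U.map C * D.map C * (U.map C)ᵀ := by
    rw [Matrix.map_mul, Matrix.map_mul, Matrix.transpose_map]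
  rw [hmap]
  have hUm : (U.map C)ᵀ * U.map C = 1 := by
    rw [← Matrix.transpose_map, ← Matrix.map_mul, hU]; simp [Matrix.map_one]
  have hUm' : U.map C * (U.map C)ᵀ = 1 := by
    rw [← Matrix.transpose_map, ← Matrix.map_mul, hU']; simp [Matrix.map_one]
  have hscal : (Matrix.scalar (Fin d)) X
      = (X : Polynomial ℝ) • (1 : Matrix (Fin d) (Fin d) (Polynomial ℝ)) := by
    ext i j
    by_cases h : i = j <;>
      simp [Matrix.scalar_apply, Matrix.diagonal_apply, Matrix.one_apply, h]
  have key : (Matrix.scalar (Fin d)) X - U.map C * D.map C * (U.map C)ᵀ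
      = U.map C * ((Matrix.scalar (Fin d)) X - D.map C) * (U.map C)ᵀ := by
    rw [Matrix.mul_sub, Matrix.sub_mul]
    congr 1
    rw [hscal, Matrix.mul_smul, Matrix.smul_mul, Matrix.mul_one, hUm']
  rw [key, Matrix.det_mul, Matrix.det_mul, mul_comm, ← mul_assoc, ← Matrix.det_mul, hUm]
  simp

lemma sum_comp_of_conj {d : ℕ} (U : Matrix (Fin d) (Fin d) ℝ) (hU : Uᵀ * U = 1)
    (μ : Fin d → ℝ) (M : Matrix (Fin d) (Fin d) ℝ) (hM : M.IsHermitian)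
    (hMeq : M = U * Matrix.diagonal μ * Uᵀ) (g : ℝ → ℝ) :
    ∑ i, g (hM.eigenvalues i) = ∑ i, g (μ i) := by
  -- spectral theorem: M = W * diagonal eig * Wᵀ with W orthogonal
  have hspec := hM.spectral_theorem
  rw [Unitary.conjStarAlgAut_apply] at hspec
  set W : Matrix (Fin d) (Fin d) ℝ := (hM.eigenvectorUnitary : Matrix (Fin d) (Fin d) ℝ)
  have hWmem := hM.eigenvectorUnitary.2
  rw [Unitary.mem_iff] at hWmem
  have hWorth : Wᵀ * W = 1 := by
    have := hWmem.1
    simpa [Matrix.star_eq_conjTranspose, Matrix.conjTranspose_eq_transpose_of_trivial] using this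
  have hfun : (RCLike.ofReal ∘ hM.eigenvalues : Fin d → ℝ) = hM.eigenvalues := by
    funext i; simp
  rw [hfun] at hspec
  have hspec' : M = W * Matrix.diagonal hM.eigenvalues * Wᵀ := by
    have hstar : star W = Wᵀ := by
      simp [Matrix.star_eq_conjTranspose, Matrix.conjTranspose_eq_transpose_of_trivial]
    conv_lhs => rw [hspec, hstar]
  have h1 : M.charpoly = (Matrix.diagonal hM.eigenvalues).charpoly := by
    conv_lhs => rw [hspec']
    exact charpoly_conj_orth W hWorth _
  have h2 : M.charpoly = (Matrix.diagonal μ).charpoly := by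
    conv_lhs => rw [hMeq]
    exact charpoly_conj_orth U hU _
  have hprod : ∏ i, (X - C (hM.eigenvalues i)) = ∏ i, (X - C (μ i)) := by
    rw [← charpoly_diagonal_aux, ← charpoly_diagonal_aux, ← h1, ← h2]
  have hmult : (Finset.univ.val.map hM.eigenvalues) = (Finset.univ.val.map μ) := by
    have := congrArg Polynomial.roots hprod
    rwa [show (∏ i, (X - C (hM.eigenvalues i)))
        = ((Finset.univ.val.map hM.eigenvalues).map fun a => X - C a).prod by
          rw [Multiset.map_map]; rfl,
      show (∏ i, (X - C (μ i)))
        = ((Finset.univ.val.map μ).map fun a => X - C a).prod by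
          rw [Multiset.map_map]; rfl,
      Polynomial.roots_multiset_prod_X_sub_C, Polynomial.roots_multiset_prod_X_sub_C] at this
  calc ∑ i, g (hM.eigenvalues i)
      = ((Finset.univ.val.map hM.eigenvalues).map g).sum := by
        rw [Multiset.map_map]; rfl
    _ = ((Finset.univ.val.map μ).map g).sum := by rw [hmult]
    _ = ∑ i, g (μ i) := by rw [Multiset.map_map]; rfl

theorem nuclearNorm_fromColumns_of_shared_left_singular_vectors
    {d n m : ℕ}
    (U : Matrix (Fin d) (Fin d) ℝ) (hU : Uᵀ * U = 1)
    (V₁ : Matrix (Fin n) (Fin d) ℝ) (hV₁ : V₁ᵀ * V₁ = 1)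
    (V₂ : Matrix (Fin m) (Fin d) ℝ) (hV₂ : V₂ᵀ * V₂ = 1)
    (σ lam : Fin d → ℝ) (hσ : ∀ i, 0 ≤ σ i) (hlam : ∀ i, 0 ≤ lam i)
    (A : Matrix (Fin d) (Fin n) ℝ) (B : Matrix (Fin d) (Fin m) ℝ)
    (hA : A = U * Matrix.diagonal σ * V₁ᵀ)
    (hB : B = U * Matrix.diagonal lam * V₂ᵀ) :
    nuclearNorm (Matrix.fromCols A B)
      = ∑ i, Real.sqrt (σ i ^ 2 + lam i ^ 2) := by
  set M := Matrix.fromCols A B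
  have hMM : M * Mᴴ = U * Matrix.diagonal (fun i => σ i ^ 2 + lam i ^ 2) * Uᵀ := by
    have : Mᴴ = Matrix.fromRows Aᴴ Bᴴ :=
      Matrix.conjTranspose_fromCols_eq_fromRows_conjTranspose A B
    rw [this, Matrix.fromCols_mul_fromRows]
    have hAct : Aᴴ = Aᵀ := rfl
    have hBct : Bᴴ = Bᵀ := rfl
    have hAA : A * Aᴴ = U * Matrix.diagonal (fun i => σ i ^ 2) * Uᵀ := by
      rw [hAct, hA]
      simp only [Matrix.transpose_mul, Matrix.transpose_transpose,
        Matrix.diagonal_transpose, Matrix.mul_assoc]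
      rw [← Matrix.mul_assoc V₁ᵀ V₁, hV₁, Matrix.one_mul,
        ← Matrix.mul_assoc (Matrix.diagonal σ), Matrix.diagonal_mul_diagonal]
      rw [show (fun i => σ i * σ i) = fun i => σ i ^ 2 from funext fun i => (sq (σ i)).symm]
    have hBB : B * Bᴴ = U * Matrix.diagonal (fun i => lam i ^ 2) * Uᵀ := by
      rw [hBct, hB]
      simp only [Matrix.transpose_mul, Matrix.transpose_transpose,
        Matrix.diagonal_transpose, Matrix.mul_assoc]
      rw [← Matrix.mul_assoc V₂ᵀ V₂, hV₂, Matrix.one_mul,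
        ← Matrix.mul_assoc (Matrix.diagonal lam), Matrix.diagonal_mul_diagonal]
      rw [show (fun i => lam i * lam i) = fun i => lam i ^ 2 from funext fun i => (sq (lam i)).symm]
    rw [hAA, hBB, ← Matrix.add_mul, ← Matrix.mul_add, ← Matrix.diagonal_add]
  unfold nuclearNorm singularValues
  exact sum_comp_of_conj U hU _ _ (Matrix.isHermitian_mul_conjTranspose_self M) hMM Real.sqrt
end

section
/- If A ∈ ℝ^{d×n} and B ∈ ℝ^{d×m} have the same column spaces, all singular values of A equal α and all singular values of B equal α (so ‖A‖_* = ‖B‖_* = α·d and ‖A‖_σ = ‖B‖_σ = α), then ‖A‖_* + ‖B‖_* − ‖[A, B]‖_* = (2 − √2)·α·d. -/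
open Matrix

lemma eigenvalues_smul_one {d : ℕ} (c : ℝ) (h : (Matrix.IsHermitian (c • (1 : Matrix (Fin d) (Fin d) ℝ)))) (i : Fin d) :
    h.eigenvalues i = c := by
  have hv := h.mulVec_eigenvectorBasis i
  have hne := h.eigenvectorBasis.orthonormal.ne_zero i
  rw [smul_mulVec, one_mulVec] at hv
  have : (c - h.eigenvalues i) • ⇑(h.eigenvectorBasis i) = 0 := by
    rw [sub_smul, hv, sub_self]
  rcases smul_eq_zero.1 this with h' | h'
  · linarith
  · exact absurd ((WithLp.equiv 2 _).injective (h'.trans rfl)) hne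

lemma sv_of_mul_self {d : ℕ} {n : Type*} [Fintype n] (M : Matrix (Fin d) n ℝ)
    (c : ℝ) (h : M * Mᴴ = c • 1) (i : Fin d) : singularValues M i = Real.sqrt c := by
  unfold singularValues
  congr 1
  have hH : Matrix.IsHermitian (c • (1 : Matrix (Fin d) (Fin d) ℝ)) := h ▸ Matrix.isHermitian_mul_conjTranspose_self M
  have := eigenvalues_smul_one c hH i
  rw [← this]
  congr 1

lemma gram_eq {d k : ℕ} (α : ℝ) (U : Matrix (Fin d) (Fin d) ℝ) (hUUt : U * Uᵀ = 1)
    (V : Matrix (Fin k) (Fin d) ℝ) (hV : Vᵀ * V = 1) :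
    (U * Matrix.diagonal (fun _ => α) * Vᵀ) * (U * Matrix.diagonal (fun _ => α) * Vᵀ)ᴴ
      = (α ^ 2) • 1 := by
  have hD : (Matrix.diagonal (fun _ : Fin d => α)) = α • (1 : Matrix (Fin d) (Fin d) ℝ) := by
    rw [Matrix.smul_one_eq_diagonal]
  rw [hD, Matrix.conjTranspose_eq_transpose_of_trivial]
  simp only [Matrix.transpose_mul, Matrix.transpose_transpose, Matrix.transpose_smul,
    Matrix.transpose_one, Matrix.smul_mul, Matrix.mul_smul, Matrix.mul_one, Matrix.one_mul,
    smul_smul, Matrix.mul_assoc]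
  rw [← Matrix.mul_assoc Vᵀ V, hV, Matrix.one_mul, hUUt, sq]

theorem nuclearNorm_gap_eq_of_same_column_space_max_norm
    {d n m : ℕ} (α : ℝ) (hα : 0 < α) (hdn : d ≤ n) (hdm : d ≤ m)
    (U : Matrix (Fin d) (Fin d) ℝ) (hU : Uᵀ * U = 1)
    (V₁ : Matrix (Fin n) (Fin d) ℝ) (hV₁ : V₁ᵀ * V₁ = 1)
    (V₂ : Matrix (Fin m) (Fin d) ℝ) (hV₂ : V₂ᵀ * V₂ = 1)
    (A : Matrix (Fin d) (Fin n) ℝ) (B : Matrix (Fin d) (Fin m) ℝ)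
    (hA : A = U * Matrix.diagonal (fun _ => α) * V₁ᵀ)
    (hB : B = U * Matrix.diagonal (fun _ => α) * V₂ᵀ) :
    nuclearNorm A + nuclearNorm B - nuclearNorm (Matrix.fromCols A B)
      = (2 - Real.sqrt 2) * α * d := by
  have hUUt : U * Uᵀ = 1 := mul_eq_one_comm.mp hU
  have hAAt : A * Aᴴ = (α ^ 2) • 1 := hA ▸ gram_eq α U hUUt V₁ hV₁
  have hBBt : B * Bᴴ = (α ^ 2) • 1 := hB ▸ gram_eq α U hUUt V₂ hV₂
  have hCCt : (Matrix.fromCols A B) * (Matrix.fromCols A B)ᴴ = (2 * α ^ 2) • 1 := by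
    rw [Matrix.conjTranspose_fromCols_eq_fromRows_conjTranspose,
      Matrix.fromCols_mul_fromRows, hAAt, hBBt, ← add_smul, two_mul]
  have hsA : ∀ i, singularValues A i = α := fun i => by
    rw [sv_of_mul_self A _ hAAt, Real.sqrt_sq hα.le]
  have hsB : ∀ i, singularValues B i = α := fun i => by
    rw [sv_of_mul_self B _ hBBt, Real.sqrt_sq hα.le]
  have hsC : ∀ i, singularValues (Matrix.fromCols A B) i = Real.sqrt 2 * α := fun i => by
    rw [sv_of_mul_self _ _ hCCt, Real.sqrt_mul (by norm_num), Real.sqrt_sq hα.le]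
  unfold nuclearNorm
  simp only [hsA, hsB, hsC, Finset.sum_const, Finset.card_univ, Fintype.card_fin, nsmul_eq_mul]
  ring
end
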